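/- If g : ℝ → ℝ is three times differentiable with g' never zero and satisfies (g'')² - g' g''' = 0 on all of ℝ, then either g is affine, or g(y) = C₁ e^{C₂ y} + C₃ for constants C₁, C₂, C₃ with C₁ C₂ ≠ 0. -/

import Mathlib

/-- If `g` is `C³` with nowhere-vanishing derivative and `(g'')² = g' g'''` on `ℝ`,
then `g` is affine or `g(y) = C₁ e^{C₂ y} + C₃` with `C₁ C₂ ≠ 0`. -/
theorem exp_or_affine_of_g_equation
    (g : ℝ → ℝ) (hg : ContDiff ℝ 3 g)
    (hg' : ∀ y, deriv g y ≠ 0)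
    (heq : ∀ y, (deriv (deriv g) y)^2 = deriv g y * deriv (deriv (deriv g)) y) :
    (∃ a b : ℝ, ∀ y, g y = a * y + b) ∨
    (∃ C₁ C₂ C₃ : ℝ, C₁ * C₂ ≠ 0 ∧ ∀ y, g y = C₁ * Real.exp (C₂ * y) + C₃) := by
  have hgd : Differentiable ℝ g := hg.differentiable (by norm_num)
  have hg3 : ContDiff ℝ ((2:ℕ)+1) g := by exact_mod_cast hg
  have hf2 : ContDiff ℝ 2 (deriv g) := (contDiff_succ_iff_deriv.mp hg3).2.2
  have hf2' : ContDiff ℝ ((1:ℕ)+1) (deriv g) := by exact_mod_cast hf2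
  have hfd : Differentiable ℝ (deriv g) := hf2.differentiable (by norm_num)
  have hf'1 : ContDiff ℝ 1 (deriv (deriv g)) := (contDiff_succ_iff_deriv.mp hf2').2.2
  have hf'd : Differentiable ℝ (deriv (deriv g)) := hf'1.differentiable (by norm_num)
  -- φ = g''/g' has zero derivative
  set φ : ℝ → ℝ := fun y => deriv (deriv g) y / deriv g y with hφ
  have hφdiff : Differentiable ℝ φ := hf'd.div hfd hg'
  have hφderiv : ∀ y, deriv φ y = 0 := by
    intro y
    have h := deriv_div (hf'd y) (hfd y) (hg' y)
    rw [hφ, show (fun y => deriv (deriv g) y / deriv g y) = deriv (deriv g) / deriv g from rfl, h, div_eq_zero_iff]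
    left
    nlinarith [heq y]
  have hφconst : ∀ y, φ y = φ 0 := fun y =>
    is_const_of_deriv_eq_zero hφdiff hφderiv y 0
  set c : ℝ := φ 0 with hc
  have hlin : ∀ y, deriv (deriv g) y = c * deriv g y := by
    intro y
    have := hφconst y
    rw [hφ] at this
    exact (div_eq_iff (hg' y)).mp this
  -- g' y = g' 0 * exp (c*y)
  have hfeq : ∀ y, deriv g y = deriv g 0 * Real.exp (c * y) := by
    intro y
    set ψ : ℝ → ℝ := fun y => deriv g y * Real.exp (-(c * y)) with hψ
    have hψdiff : Differentiable ℝ ψ := by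
      apply hfd.mul
      exact (Real.differentiable_exp.comp ((differentiable_const c).mul differentiable_id).neg)
    have hψderiv : ∀ x, deriv ψ x = 0 := by
      intro x
      have hE : HasDerivAt (fun x : ℝ => Real.exp (-(c * x))) (-c * Real.exp (-(c * x))) x := by
        have h1 : HasDerivAt (fun x : ℝ => -(c * x)) (-c) x := by
          have h0 := ((hasDerivAt_id' x).const_mul c).neg
          simp only [mul_one] at h0
          exact h0
        simpa [mul_comm] using h1.exp
      have hF : HasDerivAt (deriv g) (deriv (deriv g) x) x := (hfd x).hasDerivAt
      have := (hF.mul hE).deriv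
      rw [hψ, show (fun y => deriv g y * Real.exp (-(c * y))) = deriv g * fun x => Real.exp (-(c * x)) from rfl, this, hlin x]
      ring
    have := is_const_of_deriv_eq_zero hψdiff hψderiv y 0
    rw [hψ] at this
    simp at this
    have hE : Real.exp (-(c * y)) ≠ 0 := Real.exp_ne_zero _
    have : deriv g y = deriv g 0 / Real.exp (-(c * y)) := by
      field_simp at this ⊢
      linarith [this]
    rw [this, Real.exp_neg]
    field_simp
  rcases eq_or_ne c 0 with hc0 | hc0
  · -- affine case
    left
    refine ⟨deriv g 0, g 0, fun y => ?_⟩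
    set G : ℝ → ℝ := fun y => g y - deriv g 0 * y with hG
    have hGdiff : Differentiable ℝ G := hgd.sub ((differentiable_const _).mul differentiable_id)
    have hGderiv : ∀ x, deriv G x = 0 := by
      intro x
      have h1 : HasDerivAt (fun y : ℝ => deriv g 0 * y) (deriv g 0) x := by
        simpa using (hasDerivAt_id x).const_mul (deriv g 0)
      have h2 : HasDerivAt g (deriv g x) x := (hgd x).hasDerivAt
      have := (h2.sub h1).deriv
      rw [hG, show (fun y => g y - deriv g 0 * y) = g - fun y => deriv g 0 * y from rfl, this, hfeq x, hc0]
      simp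
    have := is_const_of_deriv_eq_zero hGdiff hGderiv y 0
    rw [hG] at this
    simp at this
    linarith [this]
  · -- exponential case
    right
    refine ⟨deriv g 0 / c, c, g 0 - deriv g 0 / c, ?_, fun y => ?_⟩
    · field_simp
      exact hg' 0
    · set G : ℝ → ℝ := fun y => g y - deriv g 0 / c * Real.exp (c * y) with hG
      have hGdiff : Differentiable ℝ G := by
        apply hgd.sub
        exact (Real.differentiable_exp.comp ((differentiable_const c).mul differentiable_id)).const_mul _
      have hGderiv : ∀ x, deriv G x = 0 := by
        intro x
        have hE : HasDerivAt (fun x : ℝ => Real.exp (c * x)) (c * Real.exp (c * x)) x := by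
          have h1 : HasDerivAt (fun x : ℝ => c * x) c x := by
            simpa using (hasDerivAt_id x).const_mul c
          simpa [mul_comm] using h1.exp
        have h2 : HasDerivAt g (deriv g x) x := (hgd x).hasDerivAt
        have := (h2.sub (hE.const_mul (deriv g 0 / c))).deriv
        rw [hG, show (fun y => g y - deriv g 0 / c * Real.exp (c * y)) = g - fun y => deriv g 0 / c * Real.exp (c * y) from rfl, this, hfeq x]
        field_simp
        ring
      have := is_const_of_deriv_eq_zero hGdiff hGderiv y 0
      rw [hG] at this
      simp at this
      linarith [this]
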